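/- Fix R2 ≥ 0, pmfs Q1 on 𝒳1 and Q2 on 𝒳2, and a channel q1 with q1(y|x1,x2) > 0 for all arguments. Then at R1 = 0 the benchmark exponent is dominated by the optimized new exponent: E_{B,1}(0, R2) ≤ sup_{(ρ,λ)∈[0,1]²} E_{R,1}(0, R2, Q1, Q2, ρ, λ). -/

import Mathlib

open Finset

section InfoDefs

variable {Ω : Type*} [Fintype Ω]

/-- A probability mass function on a finite type. -/
def IsPMF {α : Type*} [Fintype α] (p : α → ℝ) : Prop :=
  (∀ a, 0 ≤ p a) ∧ ∑ a, p a = 1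

/-- Pushforward of `P` along `f` (the pmf of the random variable `f`). -/
noncomputable def pushf {α : Type*} [Fintype α] [DecidableEq α]
    (P : Ω → ℝ) (f : Ω → α) (a : α) : ℝ :=
  ∑ ω, if f ω = a then P ω else 0

/-- Entropy of the random variable `f` under `P`. -/
noncomputable def entH {α : Type*} [Fintype α] [DecidableEq α]
    (P : Ω → ℝ) (f : Ω → α) : ℝ :=
  -∑ a, pushf P f a * Real.log (pushf P f a)

/-- Conditional entropy `H(g | f)` under `P`. -/
noncomputable def condEnt {α β : Type*} [Fintype α] [DecidableEq α] [Fintype β] [DecidableEq β]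
    (P : Ω → ℝ) (f : Ω → α) (g : Ω → β) : ℝ :=
  -∑ a, ∑ b, pushf P (fun ω => (f ω, g ω)) (a, b) *
      Real.log (pushf P (fun ω => (f ω, g ω)) (a, b) / pushf P f a)

/-- Mutual information `I(f;g)` under `P`. -/
noncomputable def mutI {α β : Type*} [Fintype α] [DecidableEq α] [Fintype β] [DecidableEq β]
    (P : Ω → ℝ) (f : Ω → α) (g : Ω → β) : ℝ :=
  ∑ a, ∑ b, pushf P (fun ω => (f ω, g ω)) (a, b) *
      Real.log (pushf P (fun ω => (f ω, g ω)) (a, b) / (pushf P f a * pushf P g b))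

/-- Conditional mutual information `I(f;g|h)` under `P`. -/
noncomputable def condMutI {α β γ : Type*} [Fintype α] [DecidableEq α] [Fintype β]
    [DecidableEq β] [Fintype γ] [DecidableEq γ]
    (P : Ω → ℝ) (f : Ω → α) (g : Ω → β) (h : Ω → γ) : ℝ :=
  ∑ a, ∑ b, ∑ c, pushf P (fun ω => (f ω, g ω, h ω)) (a, b, c) *
      Real.log (pushf P (fun ω => (f ω, g ω, h ω)) (a, b, c) * pushf P h c /
        (pushf P (fun ω => (f ω, h ω)) (a, c) * pushf P (fun ω => (g ω, h ω)) (b, c)))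

end InfoDefs
section IFC

variable {X1 X2 Y1 : Type*} [Fintype X1] [DecidableEq X1] [Fintype X2] [DecidableEq X2]
  [Fintype Y1] [DecidableEq Y1]

/-- The function `g(ρ,λ,P,P')`. -/
noncomputable def gFun (q1 : X1 → X2 → Y1 → ℝ) (ρ lam : ℝ)
    (P P' : X1 × X2 × Y1 → ℝ) : ℝ :=
  -(1 - ρ * lam) * (∑ z, P z * Real.log (q1 z.1 z.2.1 z.2.2))
    - ρ * lam * (∑ z, P' z * Real.log (q1 z.1 z.2.1 z.2.2))

/-- The function `f1(ρ,λ,P,P')`. -/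
noncomputable def f1Fun (q1 : X1 → X2 → Y1 → ℝ) (R2 ρ lam : ℝ)
    (P P' : X1 × X2 × Y1 → ℝ) : ℝ :=
  gFun q1 ρ lam P P'
    - condEnt P (fun z => z.1) (fun z => z.2.2)
    + ρ * mutI P' (fun z => z.1) (fun z => z.2.2)
    + max (mutI P (fun z => z.2.1) (fun z => (z.1, z.2.2)) - R2)
        ((1 - ρ * lam) * (mutI P (fun z => z.2.1) (fun z => (z.1, z.2.2)) - R2))
    + max (max ((1 - ρ) * mutI P' (fun z => z.2.1) (fun z => z.2.2)
            + ρ * mutI P' (fun z => z.2.1) (fun z => (z.1, z.2.2)) - R2)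
          (ρ * (mutI P' (fun z => z.2.1) (fun z => (z.1, z.2.2)) - R2)))
        (ρ * lam * (mutI P' (fun z => z.2.1) (fun z => (z.1, z.2.2)) - R2))

/-- The function `f2(ρ,λ,P,P')`. -/
noncomputable def f2Fun (q1 : X1 → X2 → Y1 → ℝ) (R2 ρ lam : ℝ)
    (P P' : X1 × X2 × Y1 → ℝ) : ℝ :=
  gFun q1 ρ lam P P'
    - condEnt P (fun z => z.1) (fun z => z.2.2)
    + ρ * mutI P' (fun z => z.1) (fun z => (z.2.1, z.2.2))
    + mutI P (fun z => z.2.1) (fun z => (z.1, z.2.2)) - R2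

/-- The constraint set `S1(Q1,Q2)`. -/
def S1set (Y1 : Type*) [Fintype Y1] [DecidableEq Y1] (Q1 : X1 → ℝ) (Q2 : X2 → ℝ) :
    Set ((X1 × X2 × Y1 → ℝ) × (X1 × X2 × Y1 → ℝ)) :=
  {PP | IsPMF PP.1 ∧ IsPMF PP.2 ∧
    pushf PP.1 (fun z => z.2.2) = pushf PP.2 (fun z => z.2.2) ∧
    pushf PP.1 (fun z => z.1) = Q1 ∧ pushf PP.2 (fun z => z.1) = Q1 ∧
    pushf PP.1 (fun z => z.2.1) = Q2 ∧ pushf PP.2 (fun z => z.2.1) = Q2}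

/-- The constraint set `S2(Q1,Q2,R2)`. -/
def S2set (Y1 : Type*) [Fintype Y1] [DecidableEq Y1] (Q1 : X1 → ℝ) (Q2 : X2 → ℝ) (R2 : ℝ) :
    Set ((X1 × X2 × Y1 → ℝ) × (X1 × X2 × Y1 → ℝ)) :=
  {PP | IsPMF PP.1 ∧ IsPMF PP.2 ∧
    pushf PP.1 (fun z => z.1) = Q1 ∧ pushf PP.2 (fun z => z.1) = Q1 ∧
    pushf PP.1 (fun z => z.2.1) = Q2 ∧ pushf PP.2 (fun z => z.2.1) = Q2 ∧
    R2 ≤ mutI PP.1 (fun z => z.2.1) (fun z => z.2.2) ∧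
    pushf PP.1 (fun z => (z.2.1, z.2.2)) = pushf PP.2 (fun z => (z.2.1, z.2.2))}

/-- The error exponent `E_{R,1}(R1,R2,Q1,Q2,ρ,λ)` (with `+∞` for infima over empty sets). -/
noncomputable def ER1 (q1 : X1 → X2 → Y1 → ℝ) (R1 R2 : ℝ) (Q1 : X1 → ℝ) (Q2 : X2 → ℝ)
    (ρ lam : ℝ) : EReal :=
  ((R2 - ρ * R1 : ℝ) : EReal) +
    min (⨅ PP : S1set Y1 Q1 Q2, ((f1Fun q1 R2 ρ lam PP.1.1 PP.1.2 : ℝ) : EReal))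
        (⨅ PP : S2set Y1 Q1 Q2 R2, ((f2Fun q1 R2 ρ lam PP.1.1 PP.1.2 : ℝ) : EReal))

end IFC

section Benchmark

variable {X1 X2 Y1 : Type*} [Fintype X1] [DecidableEq X1] [Fintype X2] [DecidableEq X2]
  [Fintype Y1] [DecidableEq Y1]

/-- The conditional relative entropy `D(P_{Ŷ1|X̂1,X̂2} ‖ q1 | P_{X̂1,X̂2})`. -/
noncomputable def Dq (q1 : X1 → X2 → Y1 → ℝ) (P : X1 × X2 × Y1 → ℝ) : ℝ :=
  ∑ z, P z * Real.log (P z /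
    (pushf P (fun w => (w.1, w.2.1)) (z.1, z.2.1) * q1 z.1 z.2.1 z.2.2))

/-- The set `𝒫(Q1,Q2)` of joint pmfs on `X1 × X2 × Y1` with the prescribed marginals. -/
def Pset (Y1 : Type*) [Fintype Y1] [DecidableEq Y1] {X1 X2 : Type*}
    [Fintype X1] [DecidableEq X1] [Fintype X2] [DecidableEq X2]
    (Q1 : X1 → ℝ) (Q2 : X2 → ℝ) : Set (X1 × X2 × Y1 → ℝ) :=
  {P | IsPMF P ∧ pushf P (fun z => z.1) = Q1 ∧ pushf P (fun z => z.2.1) = Q2}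

/-- The benchmark exponent `E_{1,2}(R1,R2)`. -/
noncomputable def E12 (q1 : X1 → X2 → Y1 → ℝ) (Q1 : X1 → ℝ) (Q2 : X2 → ℝ)
    (R1 R2 : ℝ) : EReal :=
  ⨅ P : Pset Y1 Q1 Q2,
    ((Dq q1 P.1 + mutI P.1 (fun z => z.1) (fun z => z.2.1)
      + max (mutI P.1 (fun z => z.1) (fun z => z.2.2)
          + mutI P.1 (fun z => z.2.1) (fun z => (z.1, z.2.2)) - R1 - R2) 0 : ℝ) : EReal)

/-- The benchmark exponent `E_{1|2}(R1)`. -/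
noncomputable def E1g2 (q1 : X1 → X2 → Y1 → ℝ) (Q1 : X1 → ℝ) (Q2 : X2 → ℝ)
    (R1 : ℝ) : EReal :=
  ⨅ P : Pset Y1 Q1 Q2,
    ((Dq q1 P.1 + mutI P.1 (fun z => z.1) (fun z => z.2.1)
      + max (mutI P.1 (fun z => z.1) (fun z => (z.2.1, z.2.2)) - R1) 0 : ℝ) : EReal)

/-- The benchmark exponent `E_1(R1)`. -/
noncomputable def E1only (q1 : X1 → X2 → Y1 → ℝ) (Q1 : X1 → ℝ) (Q2 : X2 → ℝ)
    (R1 : ℝ) : EReal :=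
  ⨅ P : Pset Y1 Q1 Q2,
    ((Dq q1 P.1 + mutI P.1 (fun z => z.1) (fun z => z.2.1)
      + max (mutI P.1 (fun z => z.1) (fun z => z.2.2) - R1) 0 : ℝ) : EReal)

/-- The benchmark exponent `E_{B,1}(R1,R2)`. -/
noncomputable def EB1 (q1 : X1 → X2 → Y1 → ℝ) (Q1 : X1 → ℝ) (Q2 : X2 → ℝ)
    (R1 R2 : ℝ) : EReal :=
  max (E1only q1 Q1 Q2 R1) (min (E12 q1 Q1 Q2 R1 R2) (E1g2 q1 Q1 Q2 R1))

end Benchmark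

section Gen
variable {Ω : Type*} [Fintype Ω] {α β : Type*} [Fintype α] [DecidableEq α]
  [Fintype β] [DecidableEq β] {P P' : Ω → ℝ} {f : Ω → α} {g : Ω → β}

lemma pushf_nonneg (hP : ∀ z, 0 ≤ P z) (a : α) : 0 ≤ pushf P f a :=
  Finset.sum_nonneg fun z _ => by split <;> simp [hP z]

lemma le_pushf_self (hP : ∀ z, 0 ≤ P z) (z : Ω) : P z ≤ pushf P f (f z) := by
  classical
  have := Finset.single_le_sum (f := fun ω => if f ω = f z then P ω else 0)
    (fun ω _ => by split <;> simp [hP ω]) (Finset.mem_univ z)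
  simpa [pushf] using this

lemma pushf_pos (hP : ∀ z, 0 ≤ P z) {z : Ω} (hz : 0 < P z) : 0 < pushf P f (f z) :=
  lt_of_lt_of_le hz (le_pushf_self hP z)

lemma pushf_apply_inj (hf : Function.Injective f) (z : Ω) : pushf P f (f z) = P z := by
  classical
  rw [pushf]
  rw [Finset.sum_eq_single z (fun b _ hb => by
    rw [if_neg (fun h => hb (hf h))]) (fun h => absurd (Finset.mem_univ z) h)]
  simp

lemma sum_pushf_mul (c : α → ℝ) : ∑ a, pushf P f a * c a = ∑ z, P z * c (f z) := by
  classical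
  simp only [pushf, Finset.sum_mul, ite_mul, zero_mul]
  rw [Finset.sum_comm]
  refine Finset.sum_congr rfl fun z _ => ?_
  simp

lemma sum_pushf : ∑ a, pushf P f a = ∑ z, P z := by
  simpa using sum_pushf_mul (P := P) (f := f) (fun _ => 1)

lemma pushf_pair_le_fst (hP : ∀ z, 0 ≤ P z) (a : α) (b : β) :
    pushf P (fun z => (f z, g z)) (a, b) ≤ pushf P f a := by
  refine Finset.sum_le_sum fun z _ => ?_
  by_cases h : (f z, g z) = (a, b)
  · rw [if_pos h, if_pos (Prod.ext_iff.1 h).1]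
  · rw [if_neg h]
    split <;> simp [hP z]

lemma pushf_pair_le_snd (hP : ∀ z, 0 ≤ P z) (a : α) (b : β) :
    pushf P (fun z => (f z, g z)) (a, b) ≤ pushf P g b := by
  refine Finset.sum_le_sum fun z _ => ?_
  by_cases h : (f z, g z) = (a, b)
  · rw [if_pos h, if_pos (Prod.ext_iff.1 h).2]
  · rw [if_neg h]
    split <;> simp [hP z]

lemma pushf_half_add (f : Ω → α) (a : α) :
    pushf (fun z => (P z + P' z) / 2) f a = (pushf P f a + pushf P' f a) / 2 := by
  classical
  rw [pushf, pushf, pushf, ← Finset.sum_add_distrib, Finset.sum_div]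
  refine Finset.sum_congr rfl fun z _ => ?_
  split <;> simp

lemma mul_log_div_ge {a b : ℝ} (ha : 0 ≤ a) (hb : 0 ≤ b) (h : b = 0 → a = 0) :
    a - b ≤ a * Real.log (a / b) := by
  rcases eq_or_lt_of_le hb with hb0 | hb0
  · rw [h hb0.symm, ← hb0]; simp
  rcases eq_or_lt_of_le ha with ha0 | ha0
  · rw [← ha0]; simpa using hb
  have hlog : Real.log (b / a) ≤ b / a - 1 := Real.log_le_sub_one_of_pos (by positivity)
  have := mul_le_mul_of_nonneg_left hlog ha
  rw [Real.log_div hb0.ne' ha0.ne'] at this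
  have h2 : a * (b / a - 1) = b - a := by field_simp
  rw [h2] at this
  have h3 : a * Real.log (a / b) = - (a * (Real.log b - Real.log a)) := by
    rw [Real.log_div ha0.ne' hb0.ne']; ring
  rw [h3]
  linarith

lemma sum_sub_le_klSum {p q : Ω → ℝ} (hp : ∀ z, 0 ≤ p z) (hq : ∀ z, 0 ≤ q z)
    (h : ∀ z, q z = 0 → p z = 0) :
    (∑ z, p z) - ∑ z, q z ≤ ∑ z, p z * Real.log (p z / q z) := by
  rw [← Finset.sum_sub_distrib]
  exact Finset.sum_le_sum fun z _ => mul_log_div_ge (hp z) (hq z) (h z)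

lemma midpoint_mul_log_div {a b c : ℝ} (ha : 0 ≤ a) (hb : 0 ≤ b) (hc : 0 ≤ c) :
    (a + b) / 2 * Real.log ((a + b) / 2 / c) ≤
      (a * Real.log (a / c) + b * Real.log (b / c)) / 2 := by
  rcases eq_or_lt_of_le hc with hc0 | hc0
  · simp [← hc0]
  set s := (a + b) / 2 with hs
  rcases eq_or_lt_of_le (by positivity : (0:ℝ) ≤ s) with hs0 | hs0
  · have ha0 : a = 0 := by nlinarith
    have hb0 : b = 0 := by nlinarith
    simp [hs, ha0, hb0]
  -- a log(a/c) ≥ a log(s/c) + a - s etc.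
  have key : ∀ x : ℝ, 0 ≤ x → x * Real.log (s / c) + (x - s) ≤ x * Real.log (x / c) := by
    intro x hx
    have h1 : x - s ≤ x * Real.log (x / s) := mul_log_div_ge hx hs0.le (by intro h; nlinarith)
    rcases eq_or_lt_of_le hx with hx0 | hx0
    · simp [← hx0]; nlinarith
    have : Real.log (x / c) = Real.log (x / s) + Real.log (s / c) := by
      rw [← Real.log_mul (by positivity) (by positivity)]
      congr 1
      field_simp
    rw [this]
    nlinarith
  have h1 := key a ha
  have h2 := key b hb
  have h4 : (a + b) * Real.log (s / c) = 2 * (s * Real.log (s / c)) := by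
    rw [hs]; ring
  nlinarith

lemma mutI_eq_sum (P : Ω → ℝ) (f : Ω → α) (g : Ω → β) :
    mutI P f g = ∑ z, P z * Real.log (pushf P (fun ω => (f ω, g ω)) (f z, g z) /
      (pushf P f (f z) * pushf P g (g z))) := by
  have h := sum_pushf_mul (P := P) (f := fun ω => (f ω, g ω))
    (c := fun ab => Real.log (pushf P (fun ω => (f ω, g ω)) ab /
      (pushf P f ab.1 * pushf P g ab.2)))
  rw [Fintype.sum_prod_type] at h
  rw [mutI]
  exact h

lemma condEnt_eq_sum (P : Ω → ℝ) (f : Ω → α) (g : Ω → β) :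
    condEnt P f g = -∑ z, P z * Real.log (pushf P (fun ω => (f ω, g ω)) (f z, g z) /
      pushf P f (f z)) := by
  have h := sum_pushf_mul (P := P) (f := fun ω => (f ω, g ω))
    (c := fun ab => Real.log (pushf P (fun ω => (f ω, g ω)) ab / pushf P f ab.1))
  rw [Fintype.sum_prod_type] at h
  rw [condEnt]
  rw [h]

lemma mutI_nonneg (hP : IsPMF P) (f : Ω → α) (g : Ω → β) : 0 ≤ mutI P f g := by
  classical
  have hp : ∀ ab : α × β, 0 ≤ pushf P (fun ω => (f ω, g ω)) ab :=
    fun ab => pushf_nonneg hP.1 ab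
  have key := sum_sub_le_klSum (Ω := α × β)
    (p := fun ab => pushf P (fun ω => (f ω, g ω)) ab)
    (q := fun ab => pushf P f ab.1 * pushf P g ab.2)
    hp (fun ab => mul_nonneg (pushf_nonneg hP.1 _) (pushf_nonneg hP.1 _)) ?_
  · have h1 : ∑ ab : α × β, pushf P (fun ω => (f ω, g ω)) ab = 1 := by
      rw [sum_pushf, hP.2]
    have h2 : ∑ ab : α × β, pushf P f ab.1 * pushf P g ab.2 = 1 := by
      rw [Fintype.sum_prod_type]
      simp only [← Finset.mul_sum]
      rw [← Finset.sum_mul, sum_pushf, hP.2, one_mul, sum_pushf, hP.2]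
    rw [mutI_eq_sum]
    rw [← sum_pushf_mul (P := P) (f := fun ω => (f ω, g ω))
      (c := fun ab => Real.log (pushf P (fun ω => (f ω, g ω)) ab /
        (pushf P f ab.1 * pushf P g ab.2)))]
    calc (0:ℝ) = (∑ ab : α × β, pushf P (fun ω => (f ω, g ω)) ab) -
        ∑ ab : α × β, pushf P f ab.1 * pushf P g ab.2 := by rw [h1, h2]; ring
    _ ≤ _ := by simpa using key
  · rintro ⟨a, b⟩ hab
    rcases mul_eq_zero.1 hab with h | h
    · refine Finset.sum_eq_zero fun z _ => ?_
      split
      · rename_i hz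
        have : f z = a := (Prod.ext_iff.1 hz).1
        have h0 := le_pushf_self (f := f) hP.1 z
        rw [this, h] at h0
        linarith [hP.1 z]
      · rfl
    · refine Finset.sum_eq_zero fun z _ => ?_
      split
      · rename_i hz
        have : g z = b := (Prod.ext_iff.1 hz).2
        have h0 := le_pushf_self (f := g) hP.1 z
        rw [this, h] at h0
        linarith [hP.1 z]
      · rfl

end Gen

noncomputable def klS {γ : Type*} [Fintype γ] (p q : γ → ℝ) : ℝ :=
  ∑ x, p x * Real.log (p x / q x)

lemma klS_midpoint {γ : Type*} [Fintype γ] {p p' q : γ → ℝ}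
    (hp : ∀ x, 0 ≤ p x) (hp' : ∀ x, 0 ≤ p' x) (hq : ∀ x, 0 ≤ q x) :
    klS (fun x => (p x + p' x) / 2) q ≤ (klS p q + klS p' q) / 2 := by
  rw [klS, klS, klS, ← Finset.sum_add_distrib, Finset.sum_div]
  exact Finset.sum_le_sum fun x _ => midpoint_mul_log_div (hp x) (hp' x) (hq x)

lemma klS_nonneg {γ : Type*} [Fintype γ] {p q : γ → ℝ}
    (hp : ∀ x, 0 ≤ p x) (hq : ∀ x, 0 ≤ q x) (hsupp : ∀ x, q x = 0 → p x = 0)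
    (hsum : ∑ x, q x ≤ ∑ x, p x) : 0 ≤ klS p q :=
  le_trans (by linarith) (sum_sub_le_klSum hp hq hsupp)

section Spec

variable {X1 X2 Y1 : Type*} [Fintype X1] [DecidableEq X1] [Fintype X2] [DecidableEq X2]
  [Fintype Y1] [DecidableEq Y1]

/-- reference measure Q1 ⊗ Q2 ⊗ q1 -/
noncomputable def rRef (q1 : X1 → X2 → Y1 → ℝ) (Q1 : X1 → ℝ) (Q2 : X2 → ℝ) :
    X1 × X2 × Y1 → ℝ := fun z => Q1 z.1 * Q2 z.2.1 * q1 z.1 z.2.1 z.2.2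

noncomputable def wRef (Q1 : X1 → ℝ) (Q2 : X2 → ℝ) (ν : Y1 → ℝ) :
    X1 × X2 × Y1 → ℝ := fun z => Q1 z.1 * Q2 z.2.1 * ν z.2.2

noncomputable def vRef (Q1 : X1 → ℝ) (μ : X2 × Y1 → ℝ) :
    X1 × X2 × Y1 → ℝ := fun z => Q1 z.1 * μ (z.2.1, z.2.2)

variable (Q1 : X1 → ℝ) (Q2 : X2 → ℝ) (q1 : X1 → X2 → Y1 → ℝ)

noncomputable def aP (P : X1 × X2 × Y1 → ℝ) : ℝ := ∑ z, P z * Real.log (P z)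
noncomputable def a1 (P : X1 × X2 × Y1 → ℝ) : ℝ := ∑ z, P z * Real.log (Q1 z.1)
noncomputable def a2 (P : X1 × X2 × Y1 → ℝ) : ℝ := ∑ z, P z * Real.log (Q2 z.2.1)
noncomputable def a3 (P : X1 × X2 × Y1 → ℝ) : ℝ :=
  ∑ z, P z * Real.log (pushf P (fun ω => ω.2.2) z.2.2)
noncomputable def a12 (P : X1 × X2 × Y1 → ℝ) : ℝ :=
  ∑ z, P z * Real.log (pushf P (fun ω => (ω.1, ω.2.1)) (z.1, z.2.1))
noncomputable def a13 (P : X1 × X2 × Y1 → ℝ) : ℝ :=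
  ∑ z, P z * Real.log (pushf P (fun ω => (ω.1, ω.2.2)) (z.1, z.2.2))
noncomputable def a23 (P : X1 × X2 × Y1 → ℝ) : ℝ :=
  ∑ z, P z * Real.log (pushf P (fun ω => (ω.2.1, ω.2.2)) (z.2.1, z.2.2))
noncomputable def aq (P : X1 × X2 × Y1 → ℝ) : ℝ :=
  ∑ z, P z * Real.log (q1 z.1 z.2.1 z.2.2)

end Spec

set_option linter.unusedSectionVars false

section Dec

variable {X1 X2 Y1 : Type*} [Fintype X1] [DecidableEq X1] [Fintype X2] [DecidableEq X2]
  [Fintype Y1] [DecidableEq Y1]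
  {Q1 : X1 → ℝ} {Q2 : X2 → ℝ} {q1 : X1 → X2 → Y1 → ℝ}
  {P : X1 × X2 × Y1 → ℝ}

lemma dec_mutI13 (hP : IsPMF P) (hm1 : pushf P (fun z => z.1) = Q1) :
    mutI P (fun z => z.1) (fun z => z.2.2) = a13 P - a1 Q1 P - a3 P := by
  simp only [mutI_eq_sum]
  rw [a13, a1, a3, ← Finset.sum_sub_distrib, ← Finset.sum_sub_distrib]
  refine Finset.sum_congr rfl fun z _ => ?_
  by_cases hz : P z = 0
  · simp [hz]
  · have hPz := lt_of_le_of_ne (hP.1 z) (Ne.symm hz)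
    have h13 : 0 < pushf P (fun ω => (ω.1, ω.2.2)) (z.1, z.2.2) := pushf_pos hP.1 hPz
    have h1 : 0 < Q1 z.1 := by rw [← hm1]; exact pushf_pos hP.1 hPz
    have h3 : 0 < pushf P (fun z => z.2.2) z.2.2 := pushf_pos hP.1 hPz
    rw [hm1]
    rw [Real.log_div h13.ne' (by positivity), Real.log_mul h1.ne' h3.ne']
    ring

lemma inj_2_13 : Function.Injective (fun ω : X1 × X2 × Y1 => (ω.2.1, (ω.1, ω.2.2))) := by
  rintro ⟨a1, a2, a3⟩ ⟨b1, b2, b3⟩ h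
  simp only [Prod.mk.injEq] at h
  simp [h.1, h.2.1, h.2.2]

lemma inj_1_23 : Function.Injective (fun ω : X1 × X2 × Y1 => (ω.1, (ω.2.1, ω.2.2))) := by
  rintro ⟨a1, a2, a3⟩ ⟨b1, b2, b3⟩ h
  simp only [Prod.mk.injEq] at h
  simp [h.1, h.2.1, h.2.2]

lemma dec_mutI2_13 (hP : IsPMF P) (hm2 : pushf P (fun z => z.2.1) = Q2) :
    mutI P (fun z => z.2.1) (fun z => (z.1, z.2.2)) = aP P - a2 Q2 P - a13 P := by
  simp only [mutI_eq_sum]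
  rw [aP, a2, a13, ← Finset.sum_sub_distrib, ← Finset.sum_sub_distrib]
  refine Finset.sum_congr rfl fun z _ => ?_
  by_cases hz : P z = 0
  · simp [hz]
  · have hPz := lt_of_le_of_ne (hP.1 z) (Ne.symm hz)
    have hfull : pushf P (fun ω => (ω.2.1, (ω.1, ω.2.2))) (z.2.1, (z.1, z.2.2)) = P z :=
      pushf_apply_inj inj_2_13 z
    have h13 : 0 < pushf P (fun ω => (ω.1, ω.2.2)) (z.1, z.2.2) := pushf_pos hP.1 hPz
    have h2 : 0 < Q2 z.2.1 := by rw [← hm2]; exact pushf_pos hP.1 hPz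
    rw [hfull, hm2]
    rw [Real.log_div hPz.ne' (by positivity), Real.log_mul h2.ne' h13.ne']
    ring

lemma dec_mutI1_23 (hP : IsPMF P) (hm1 : pushf P (fun z => z.1) = Q1) :
    mutI P (fun z => z.1) (fun z => (z.2.1, z.2.2)) = aP P - a1 Q1 P - a23 P := by
  simp only [mutI_eq_sum]
  rw [aP, a1, a23, ← Finset.sum_sub_distrib, ← Finset.sum_sub_distrib]
  refine Finset.sum_congr rfl fun z _ => ?_
  by_cases hz : P z = 0
  · simp [hz]
  · have hPz := lt_of_le_of_ne (hP.1 z) (Ne.symm hz)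
    have hfull : pushf P (fun ω => (ω.1, (ω.2.1, ω.2.2))) (z.1, (z.2.1, z.2.2)) = P z :=
      pushf_apply_inj inj_1_23 z
    have h23 : 0 < pushf P (fun ω => (ω.2.1, ω.2.2)) (z.2.1, z.2.2) := pushf_pos hP.1 hPz
    have h1 : 0 < Q1 z.1 := by rw [← hm1]; exact pushf_pos hP.1 hPz
    rw [hfull, hm1]
    rw [Real.log_div hPz.ne' (by positivity), Real.log_mul h1.ne' h23.ne']
    ring

lemma dec_mutI12 (hP : IsPMF P) (hm1 : pushf P (fun z => z.1) = Q1)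
    (hm2 : pushf P (fun z => z.2.1) = Q2) :
    mutI P (fun z => z.1) (fun z => z.2.1) = a12 P - a1 Q1 P - a2 Q2 P := by
  simp only [mutI_eq_sum]
  rw [a12, a1, a2, ← Finset.sum_sub_distrib, ← Finset.sum_sub_distrib]
  refine Finset.sum_congr rfl fun z _ => ?_
  by_cases hz : P z = 0
  · simp [hz]
  · have hPz := lt_of_le_of_ne (hP.1 z) (Ne.symm hz)
    have h12 : 0 < pushf P (fun ω => (ω.1, ω.2.1)) (z.1, z.2.1) := pushf_pos hP.1 hPz
    have h1 : 0 < Q1 z.1 := by rw [← hm1]; exact pushf_pos hP.1 hPz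
    have h2 : 0 < Q2 z.2.1 := by rw [← hm2]; exact pushf_pos hP.1 hPz
    rw [hm1, hm2]
    rw [Real.log_div h12.ne' (by positivity), Real.log_mul h1.ne' h2.ne']
    ring

lemma dec_condEnt13 (hP : IsPMF P) (hm1 : pushf P (fun z => z.1) = Q1) :
    condEnt P (fun z => z.1) (fun z => z.2.2) = a1 Q1 P - a13 P := by
  simp only [condEnt_eq_sum]
  rw [a1, a13, ← Finset.sum_sub_distrib, ← Finset.sum_neg_distrib]
  refine Finset.sum_congr rfl fun z _ => ?_
  by_cases hz : P z = 0
  · simp [hz]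
  · have hPz := lt_of_le_of_ne (hP.1 z) (Ne.symm hz)
    have h13 : 0 < pushf P (fun ω => (ω.1, ω.2.2)) (z.1, z.2.2) := pushf_pos hP.1 hPz
    have h1 : 0 < Q1 z.1 := by rw [← hm1]; exact pushf_pos hP.1 hPz
    rw [hm1]
    rw [Real.log_div h13.ne' h1.ne']
    ring


lemma dec_Dq (hP : IsPMF P) (hq_pos : ∀ x1 x2 y, 0 < q1 x1 x2 y) :
    (∑ z : X1 × X2 × Y1, P z * Real.log (P z /
      (pushf P (fun w => (w.1, w.2.1)) (z.1, z.2.1) * q1 z.1 z.2.1 z.2.2)))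
      = aP P - a12 P - aq q1 P := by
  rw [aP, a12, aq, ← Finset.sum_sub_distrib, ← Finset.sum_sub_distrib]
  refine Finset.sum_congr rfl fun z _ => ?_
  by_cases hz : P z = 0
  · simp [hz]
  · have hPz := lt_of_le_of_ne (hP.1 z) (Ne.symm hz)
    have h12 : 0 < pushf P (fun ω => (ω.1, ω.2.1)) (z.1, z.2.1) := pushf_pos hP.1 hPz
    have hq := hq_pos z.1 z.2.1 z.2.2
    rw [Real.log_div hPz.ne' (by positivity), Real.log_mul h12.ne' hq.ne']
    ring

lemma dec_klR (hP : IsPMF P) (hq_pos : ∀ x1 x2 y, 0 < q1 x1 x2 y)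
    (hm1 : pushf P (fun z => z.1) = Q1) (hm2 : pushf P (fun z => z.2.1) = Q2) :
    klS P (rRef q1 Q1 Q2) = aP P - a1 Q1 P - a2 Q2 P - aq q1 P := by
  rw [klS, aP, a1, a2, aq, ← Finset.sum_sub_distrib, ← Finset.sum_sub_distrib,
    ← Finset.sum_sub_distrib]
  refine Finset.sum_congr rfl fun z _ => ?_
  by_cases hz : P z = 0
  · simp [hz]
  · have hPz := lt_of_le_of_ne (hP.1 z) (Ne.symm hz)
    have h1 : 0 < Q1 z.1 := by rw [← hm1]; exact pushf_pos hP.1 hPz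
    have h2 : 0 < Q2 z.2.1 := by rw [← hm2]; exact pushf_pos hP.1 hPz
    have hq := hq_pos z.1 z.2.1 z.2.2
    rw [rRef, Real.log_div hPz.ne' (by positivity), Real.log_mul (by positivity) hq.ne',
      Real.log_mul h1.ne' h2.ne']
    ring

lemma dec_klW (hP : IsPMF P) (hm1 : pushf P (fun z => z.1) = Q1)
    (hm2 : pushf P (fun z => z.2.1) = Q2) {ν : Y1 → ℝ} (hν : pushf P (fun z => z.2.2) = ν) :
    klS P (wRef Q1 Q2 ν) = aP P - a1 Q1 P - a2 Q2 P - a3 P := by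
  rw [klS, aP, a1, a2, a3, ← Finset.sum_sub_distrib, ← Finset.sum_sub_distrib,
    ← Finset.sum_sub_distrib]
  refine Finset.sum_congr rfl fun z _ => ?_
  by_cases hz : P z = 0
  · simp [hz]
  · have hPz := lt_of_le_of_ne (hP.1 z) (Ne.symm hz)
    have h1 : 0 < Q1 z.1 := by rw [← hm1]; exact pushf_pos hP.1 hPz
    have h2 : 0 < Q2 z.2.1 := by rw [← hm2]; exact pushf_pos hP.1 hPz
    have h3 : 0 < ν z.2.2 := by rw [← hν]; exact pushf_pos hP.1 hPz
    rw [wRef, hν, Real.log_div hPz.ne' (by positivity), Real.log_mul (by positivity) h3.ne',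
      Real.log_mul h1.ne' h2.ne']
    ring

lemma dec_klV (hP : IsPMF P) (hm1 : pushf P (fun z => z.1) = Q1)
    {μ : X2 × Y1 → ℝ} (hμ : pushf P (fun z => (z.2.1, z.2.2)) = μ) :
    klS P (vRef Q1 μ) = aP P - a1 Q1 P - a23 P := by
  rw [klS, aP, a1, a23, ← Finset.sum_sub_distrib, ← Finset.sum_sub_distrib]
  refine Finset.sum_congr rfl fun z _ => ?_
  by_cases hz : P z = 0
  · simp [hz]
  · have hPz := lt_of_le_of_ne (hP.1 z) (Ne.symm hz)
    have h1 : 0 < Q1 z.1 := by rw [← hm1]; exact pushf_pos hP.1 hPz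
    have h23 : 0 < μ (z.2.1, z.2.2) := by
      rw [← hμ]; exact pushf_pos hP.1 hPz
    rw [vRef, hμ, Real.log_div hPz.ne' (by positivity), Real.log_mul h1.ne' h23.ne']
    ring

/-- bridge lemmas: these scalars only depend on the indicated marginal. -/
lemma a1_bridge (hm1 : pushf P (fun z => z.1) = Q1) :
    a1 Q1 P = ∑ x, Q1 x * Real.log (Q1 x) := by
  rw [a1, ← hm1, ← sum_pushf_mul (f := fun z : X1 × X2 × Y1 => z.1)
    (c := fun x => Real.log (pushf P (fun z => z.1) x))]

lemma a2_bridge (hm2 : pushf P (fun z => z.2.1) = Q2) :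
    a2 Q2 P = ∑ x, Q2 x * Real.log (Q2 x) := by
  rw [a2, ← hm2, ← sum_pushf_mul (f := fun z : X1 × X2 × Y1 => z.2.1)
    (c := fun x => Real.log (pushf P (fun z => z.2.1) x))]

lemma a3_bridge {ν : Y1 → ℝ} (hν : pushf P (fun z => z.2.2) = ν) :
    a3 P = ∑ y, ν y * Real.log (ν y) := by
  rw [a3, ← hν, ← sum_pushf_mul (f := fun z : X1 × X2 × Y1 => z.2.2)
    (c := fun y => Real.log (pushf P (fun z => z.2.2) y))]

lemma a23_bridge {μ : X2 × Y1 → ℝ} (hμ : pushf P (fun z => (z.2.1, z.2.2)) = μ) :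
    a23 P = ∑ bc, μ bc * Real.log (μ bc) := by
  rw [a23, ← hμ]
  have h := sum_pushf_mul (P := P) (f := fun z : X1 × X2 × Y1 => (z.2.1, z.2.2))
    (c := fun bc => Real.log (pushf P (fun z => (z.2.1, z.2.2)) bc))
  rw [← h]


lemma sum_pushf_pair_fst {α β : Type*} [Fintype α] [DecidableEq α] [Fintype β] [DecidableEq β]
    {Ω : Type*} [Fintype Ω] (P : Ω → ℝ) (f : Ω → α) (g : Ω → β) (b : β) :
    ∑ a, pushf P (fun z => (f z, g z)) (a, b) = pushf P g b := by
  simp only [pushf]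
  rw [Finset.sum_comm]
  refine Finset.sum_congr rfl fun z _ => ?_
  by_cases hg : g z = b
  · simp [Prod.ext_iff, hg]
  · simp [Prod.ext_iff, hg]

lemma sum_pushf_pair_snd {α β : Type*} [Fintype α] [DecidableEq α] [Fintype β] [DecidableEq β]
    {Ω : Type*} [Fintype Ω] (P : Ω → ℝ) (f : Ω → α) (g : Ω → β) (a : α) :
    ∑ b, pushf P (fun z => (f z, g z)) (a, b) = pushf P f a := by
  simp only [pushf]
  rw [Finset.sum_comm]
  refine Finset.sum_congr rfl fun z _ => ?_
  by_cases hf : f z = a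
  · simp [Prod.ext_iff, hf]
  · simp [Prod.ext_iff, hf]

/-- conditional mutual information `I(X1;X2|Y)` is nonnegative, in scalar form. -/
lemma condMI_nonneg (hP : IsPMF P) : 0 ≤ aP P + a3 P - a23 P - a13 P := by
  classical
  set m23 : X2 × Y1 → ℝ := pushf P (fun ω => (ω.2.1, ω.2.2)) with hm23d
  set m13 : X1 × Y1 → ℝ := pushf P (fun ω => (ω.1, ω.2.2)) with hm13d
  set m3 : Y1 → ℝ := pushf P (fun ω => ω.2.2) with hm3d
  have h23nn : ∀ w, 0 ≤ m23 w := fun w => pushf_nonneg hP.1 w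
  have h13nn : ∀ w, 0 ≤ m13 w := fun w => pushf_nonneg hP.1 w
  have h3nn : ∀ y, 0 ≤ m3 y := fun y => pushf_nonneg hP.1 y
  set qc : X1 × X2 × Y1 → ℝ :=
    fun z => m23 (z.2.1, z.2.2) * (m13 (z.1, z.2.2) / m3 z.2.2) with hqc
  have hqnn : ∀ z, 0 ≤ qc z := fun z => by
    have := h23nn (z.2.1, z.2.2); have := h13nn (z.1, z.2.2); have := h3nn z.2.2
    rw [hqc]; positivity
  have hsupp : ∀ z, qc z = 0 → P z = 0 := by
    intro z hz
    by_contra hPz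
    have hPz' := lt_of_le_of_ne (hP.1 z) (Ne.symm hPz)
    have h23 : 0 < m23 (z.2.1, z.2.2) := pushf_pos hP.1 hPz'
    have h13 : 0 < m13 (z.1, z.2.2) := pushf_pos hP.1 hPz'
    have h3 : 0 < m3 z.2.2 := pushf_pos hP.1 hPz'
    have : 0 < qc z := by rw [hqc]; positivity
    rw [hz] at this
    exact lt_irrefl 0 this
  have marg23 : ∀ y, ∑ x2, m23 (x2, y) = m3 y := fun y =>
    sum_pushf_pair_fst P (fun ω : X1 × X2 × Y1 => ω.2.1) (fun ω => ω.2.2) y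
  have marg13 : ∀ y, ∑ x1, m13 (x1, y) = m3 y := fun y =>
    sum_pushf_pair_fst P (fun ω : X1 × X2 × Y1 => ω.1) (fun ω => ω.2.2) y
  have hsum : ∑ z, qc z = ∑ z, P z := by
    have e1 : ∑ z, qc z = ∑ x1, ∑ x2, ∑ y, qc (x1, x2, y) := by
      rw [Fintype.sum_prod_type]
      exact Finset.sum_congr rfl fun x1 _ =>
        Fintype.sum_prod_type (f := fun w : X2 × Y1 => qc (x1, w))
    have e2 : ∑ x1, ∑ x2, ∑ y, qc (x1, x2, y) = ∑ y, ∑ x1, ∑ x2, qc (x1, x2, y) :=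
      (Finset.sum_congr rfl fun x1 _ => Finset.sum_comm).trans Finset.sum_comm
    have e3 : ∀ y, ∑ x1, ∑ x2, qc (x1, x2, y) = m3 y := by
      intro y
      have inner : ∀ x1 : X1, ∑ x2, qc (x1, x2, y) = m3 y * (m13 (x1, y) / m3 y) := by
        intro x1
        simp only [hqc]
        rw [← Finset.sum_mul, marg23 y]
      rw [Finset.sum_congr rfl fun x1 _ => inner x1]
      by_cases h3 : m3 y = 0
      · simp [h3]
      · rw [← Finset.mul_sum, ← Finset.sum_div, marg13 y, div_self h3, mul_one]
    rw [e1, e2, Finset.sum_congr rfl fun y _ => e3 y, hm3d, sum_pushf]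
  have hkl : 0 ≤ klS P qc :=
    klS_nonneg hP.1 hqnn hsupp (le_of_eq hsum)
  have hdec : klS P qc = aP P + a3 P - a23 P - a13 P := by
    rw [klS, aP, a3, a23, a13, ← Finset.sum_add_distrib, ← Finset.sum_sub_distrib,
      ← Finset.sum_sub_distrib]
    refine Finset.sum_congr rfl fun z _ => ?_
    by_cases hz : P z = 0
    · simp [hz]
    · have hPz := lt_of_le_of_ne (hP.1 z) (Ne.symm hz)
      have h23 : 0 < m23 (z.2.1, z.2.2) := pushf_pos hP.1 hPz
      have h13 : 0 < m13 (z.1, z.2.2) := pushf_pos hP.1 hPz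
      have h3 : 0 < m3 z.2.2 := pushf_pos hP.1 hPz
      rw [hqc]
      rw [Real.log_div hPz.ne' (by positivity), Real.log_mul h23.ne' (by positivity),
        Real.log_div h13.ne' h3.ne']
      ring
  linarith [hkl, hdec.symm.le]


lemma mutI_eq_klS {Ω α β : Type*} [Fintype Ω] [Fintype α] [DecidableEq α] [Fintype β]
    [DecidableEq β] (P : Ω → ℝ) (f : Ω → α) (g : Ω → β) :
    mutI P f g = klS (pushf P (fun ω => (f ω, g ω)))
      (fun ab => pushf P f ab.1 * pushf P g ab.2) := by
  rw [klS, Fintype.sum_prod_type]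
  rfl

lemma isPMF_mid {Ω : Type*} [Fintype Ω] {P P' : Ω → ℝ} (hP : IsPMF P) (hP' : IsPMF P') :
    IsPMF (fun z => (P z + P' z) / 2) := by
  constructor
  · intro z
    have := hP.1 z; have := hP'.1 z
    positivity
  · rw [← Finset.sum_div, Finset.sum_add_distrib, hP.2, hP'.2]
    norm_num

lemma pushf_mid_eq {Ω α : Type*} [Fintype Ω] [Fintype α] [DecidableEq α]
    {P P' : Ω → ℝ} {f : Ω → α} {m : α → ℝ}
    (h : pushf P f = m) (h' : pushf P' f = m) :
    pushf (fun z => (P z + P' z) / 2) f = m := by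
  funext a
  rw [pushf_half_add, h, h']
  ring

/-- Convexity of `I(X1;Y)` over distributions with common `X1`- and `Y`-marginals. -/
lemma mutI13_mid {Q1 : X1 → ℝ} {P P' : X1 × X2 × Y1 → ℝ}
    (hP : IsPMF P) (hP' : IsPMF P')
    (hm1 : pushf P (fun z => z.1) = Q1) (hm1' : pushf P' (fun z => z.1) = Q1)
    (h3 : pushf P (fun z => z.2.2) = pushf P' (fun z => z.2.2)) :
    mutI (fun z => (P z + P' z) / 2) (fun z => z.1) (fun z => z.2.2) ≤
      (mutI P (fun z => z.1) (fun z => z.2.2) + mutI P' (fun z => z.1) (fun z => z.2.2)) / 2 := by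
  classical
  set M : X1 × X2 × Y1 → ℝ := fun z => (P z + P' z) / 2 with hM
  set ν : Y1 → ℝ := pushf P (fun z => z.2.2) with hν
  set qq : X1 × Y1 → ℝ := fun ab => Q1 ab.1 * ν ab.2 with hqq
  have hMf1 : pushf M (fun z : X1 × X2 × Y1 => z.1) = Q1 := pushf_mid_eq hm1 hm1'
  have hMf3 : pushf M (fun z : X1 × X2 × Y1 => z.2.2) = ν := pushf_mid_eq rfl h3.symm
  have key : ∀ (R : X1 × X2 × Y1 → ℝ), pushf R (fun z => z.1) = Q1 →
      pushf R (fun z => z.2.2) = ν →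
      mutI R (fun z => z.1) (fun z => z.2.2) =
        klS (pushf R (fun ω => (ω.1, ω.2.2))) qq := by
    intro R h1 h3'
    rw [mutI_eq_klS]
    congr 1
    funext ab
    rw [hqq, ← h1, ← h3']
  rw [key M hMf1 hMf3, key P hm1 hν.symm, key P' hm1' (hν.trans h3).symm]
  have hpush : pushf M (fun ω : X1 × X2 × Y1 => (ω.1, ω.2.2)) =
      fun w => (pushf P (fun ω => (ω.1, ω.2.2)) w + pushf P' (fun ω => (ω.1, ω.2.2)) w) / 2 := by
    funext w
    exact pushf_half_add _ w
  rw [hpush]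
  refine klS_midpoint (fun w => pushf_nonneg hP.1 w) (fun w => pushf_nonneg hP'.1 w) ?_
  intro ab
  rw [hqq, ← hm1, hν]
  exact mul_nonneg (pushf_nonneg hP.1 _) (pushf_nonneg hP.1 _)

end Dec

section MainIneq

set_option linter.unusedSectionVars false

variable {X1 X2 Y1 : Type*} [Fintype X1] [DecidableEq X1] [Fintype X2] [DecidableEq X2]
  [Fintype Y1] [DecidableEq Y1]
  {q1 : X1 → X2 → Y1 → ℝ} {Q1 : X1 → ℝ} {Q2 : X2 → ℝ} {R2 : ℝ}
  {P P' : X1 × X2 × Y1 → ℝ}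

lemma maxh1 (x : ℝ) : (1/2)*x + (1/2)*max x 0 ≤ max x ((1 - 1 * (1/2)) * x) := by
  rcases le_total x 0 with h | h
  · rw [max_eq_right h]
    have : (1 - 1 * (1/2)) * x ≤ max x ((1 - 1 * (1/2)) * x) := le_max_right _ _
    nlinarith
  · rw [max_eq_left h]
    have : x ≤ max x ((1 - 1 * (1/2)) * x) := le_max_left _ _
    nlinarith

lemma maxh2 (A x : ℝ) :
    (1/2)*x + (1/2)*max x 0 ≤ max (max A (1 * x)) (1 * (1/2) * (x)) := by
  rcases le_total x 0 with h | h
  · rw [max_eq_right h]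
    have : 1 * (1/2) * x ≤ max (max A (1 * x)) (1 * (1/2) * x) := le_max_right _ _
    nlinarith
  · rw [max_eq_left h]
    have : 1 * x ≤ max (max A (1 * x)) (1 * (1/2) * x) :=
      le_trans (le_max_right A (1 * x)) (le_max_left _ _)
    nlinarith

lemma maxh3 {a : ℝ} (ha : 0 ≤ a) (x : ℝ) : max (a + x) 0 ≤ a + max x 0 := by
  apply max_le
  · exact add_le_add le_rfl (le_max_left x 0)
  · have := le_max_right x 0
    linarith

lemma maxh4 {x s s' : ℝ} (h : x ≤ (s + s') / 2) (R2 : ℝ) :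
    max (x - R2) 0 ≤ (max (s - R2) 0 + max (s' - R2) 0) / 2 := by
  apply max_le
  · have h1 := le_max_left (s - R2) 0
    have h2 := le_max_left (s' - R2) 0
    linarith
  · have h1 := le_max_right (s - R2) 0
    have h2 := le_max_right (s' - R2) 0
    linarith

lemma hgEq (q1 : X1 → X2 → Y1 → ℝ) (P P' : X1 × X2 × Y1 → ℝ) :
    gFun q1 1 (1/2) P P' = -(1/2) * aq q1 P - (1/2) * aq q1 P' := by
  rw [gFun, aq, aq]
  ring

lemma coreLB (q1 : X1 → X2 → Y1 → ℝ) (R2 : ℝ) (P P' : X1 × X2 × Y1 → ℝ) :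
    R2 + gFun q1 1 (1/2) P P' - condEnt P (fun z => z.1) (fun z => z.2.2)
      + 1 * mutI P' (fun z => z.1) (fun z => z.2.2)
      + ((1/2) * (mutI P (fun z => z.2.1) (fun z => (z.1, z.2.2)) - R2)
        + (1/2) * max (mutI P (fun z => z.2.1) (fun z => (z.1, z.2.2)) - R2) 0)
      + ((1/2) * (mutI P' (fun z => z.2.1) (fun z => (z.1, z.2.2)) - R2)
        + (1/2) * max (mutI P' (fun z => z.2.1) (fun z => (z.1, z.2.2)) - R2) 0)
    ≤ R2 + f1Fun q1 R2 1 (1/2) P P' := by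
  rw [f1Fun]
  have h1 := maxh1 (mutI P (fun z => z.2.1) (fun z => (z.1, z.2.2)) - R2)
  have h2 := maxh2 ((1 - 1) * mutI P' (fun z => z.2.1) (fun z => z.2.2)
    + 1 * mutI P' (fun z => z.2.1) (fun z => (z.1, z.2.2)) - R2)
    (mutI P' (fun z => z.2.1) (fun z => (z.1, z.2.2)) - R2)
  linarith

lemma mainS1 (hq_pos : ∀ x1 x2 y, 0 < q1 x1 x2 y)
    (hP : IsPMF P) (hP' : IsPMF P')
    (h3 : pushf P (fun z => z.2.2) = pushf P' (fun z => z.2.2))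
    (hm1 : pushf P (fun z => z.1) = Q1) (hm1' : pushf P' (fun z => z.1) = Q1)
    (hm2 : pushf P (fun z => z.2.1) = Q2) (hm2' : pushf P' (fun z => z.2.1) = Q2) :
    (Dq q1 (fun z => (P z + P' z) / 2)
        + mutI (fun z => (P z + P' z) / 2) (fun z => z.1) (fun z => z.2.1)
        + max (mutI (fun z => (P z + P' z) / 2) (fun z => z.1) (fun z => z.2.2) - 0) 0
      ≤ R2 + f1Fun q1 R2 1 (1/2) P P')
    ∧ (Dq q1 (fun z => (P z + P' z) / 2)
        + mutI (fun z => (P z + P' z) / 2) (fun z => z.1) (fun z => z.2.1)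
        + max (mutI (fun z => (P z + P' z) / 2) (fun z => z.1) (fun z => z.2.2)
            + mutI (fun z => (P z + P' z) / 2) (fun z => z.2.1) (fun z => (z.1, z.2.2))
            - 0 - R2) 0
      ≤ R2 + f1Fun q1 R2 1 (1/2) P P') := by
  set M : X1 × X2 × Y1 → ℝ := fun z => (P z + P' z) / 2 with hMdef
  have hM : IsPMF M := isPMF_mid hP hP'
  have hMm1 : pushf M (fun z => z.1) = Q1 := pushf_mid_eq hm1 hm1'
  have hMm2 : pushf M (fun z => z.2.1) = Q2 := pushf_mid_eq hm2 hm2'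
  set ν : Y1 → ℝ := pushf P (fun z => z.2.2) with hν
  have hMm3 : pushf M (fun z => z.2.2) = ν := pushf_mid_eq rfl h3.symm
  have hQ1nn : ∀ x, 0 ≤ Q1 x := fun x => hm1 ▸ pushf_nonneg hP.1 x
  have hQ2nn : ∀ x, 0 ≤ Q2 x := fun x => hm2 ▸ pushf_nonneg hP.1 x
  have hνnn : ∀ y, 0 ≤ ν y := fun y => pushf_nonneg hP.1 y
  have hrnn : ∀ z, 0 ≤ rRef q1 Q1 Q2 z := fun z => by
    have h0 := hq_pos z.1 z.2.1 z.2.2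
    have h1 := hQ1nn z.1
    have h2 := hQ2nn z.2.1
    show 0 ≤ Q1 z.1 * Q2 z.2.1 * q1 z.1 z.2.1 z.2.2
    positivity
  have hwnn : ∀ z, 0 ≤ wRef Q1 Q2 ν z := fun z => by
    have h1 := hQ1nn z.1
    have h2 := hQ2nn z.2.1
    have h3' := hνnn z.2.2
    show 0 ≤ Q1 z.1 * Q2 z.2.1 * ν z.2.2
    positivity
  -- decompositions at M
  have dDqM : Dq q1 M = aP M - a12 M - aq q1 M := by rw [Dq]; exact dec_Dq hM hq_pos
  have dI12M : mutI M (fun z => z.1) (fun z => z.2.1) = a12 M - a1 Q1 M - a2 Q2 M :=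
    dec_mutI12 hM hMm1 hMm2
  have dI13M : mutI M (fun z => z.1) (fun z => z.2.2) = a13 M - a1 Q1 M - a3 M :=
    dec_mutI13 hM hMm1
  have dI213M : mutI M (fun z => z.2.1) (fun z => (z.1, z.2.2)) = aP M - a2 Q2 M - a13 M :=
    dec_mutI2_13 hM hMm2
  have dklRM : klS M (rRef q1 Q1 Q2) = aP M - a1 Q1 M - a2 Q2 M - aq q1 M :=
    dec_klR hM hq_pos hMm1 hMm2
  have dklWM : klS M (wRef Q1 Q2 ν) = aP M - a1 Q1 M - a2 Q2 M - a3 M :=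
    dec_klW hM hMm1 hMm2 hMm3
  -- decompositions at P and P'
  have dklRP : klS P (rRef q1 Q1 Q2) = aP P - a1 Q1 P - a2 Q2 P - aq q1 P :=
    dec_klR hP hq_pos hm1 hm2
  have dklRP' : klS P' (rRef q1 Q1 Q2) = aP P' - a1 Q1 P' - a2 Q2 P' - aq q1 P' :=
    dec_klR hP' hq_pos hm1' hm2'
  have dklWP : klS P (wRef Q1 Q2 ν) = aP P - a1 Q1 P - a2 Q2 P - a3 P :=
    dec_klW hP hm1 hm2 hν.symm
  have dklWP' : klS P' (wRef Q1 Q2 ν) = aP P' - a1 Q1 P' - a2 Q2 P' - a3 P' :=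
    dec_klW hP' hm1' hm2' (hν.trans h3).symm
  have dI13P : mutI P (fun z => z.1) (fun z => z.2.2) = a13 P - a1 Q1 P - a3 P :=
    dec_mutI13 hP hm1
  have dI13P' : mutI P' (fun z => z.1) (fun z => z.2.2) = a13 P' - a1 Q1 P' - a3 P' :=
    dec_mutI13 hP' hm1'
  have dI213P : mutI P (fun z => z.2.1) (fun z => (z.1, z.2.2)) = aP P - a2 Q2 P - a13 P :=
    dec_mutI2_13 hP hm2
  have dI213P' : mutI P' (fun z => z.2.1) (fun z => (z.1, z.2.2)) = aP P' - a2 Q2 P' - a13 P' :=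
    dec_mutI2_13 hP' hm2'
  have dCEP : condEnt P (fun z => z.1) (fun z => z.2.2) = a1 Q1 P - a13 P :=
    dec_condEnt13 hP hm1
  -- bridges
  have b1 : a1 Q1 P = a1 Q1 P' := (a1_bridge hm1).trans (a1_bridge hm1').symm
  have b2 : a2 Q2 P = a2 Q2 P' := (a2_bridge hm2).trans (a2_bridge hm2').symm
  have b3 : a3 P = a3 P' := (a3_bridge hν.symm).trans (a3_bridge (hν.trans h3).symm).symm
  -- midpoint convexity
  have midR : klS M (rRef q1 Q1 Q2) ≤ (klS P (rRef q1 Q1 Q2) + klS P' (rRef q1 Q1 Q2)) / 2 :=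
    klS_midpoint hP.1 hP'.1 hrnn
  have midW : klS M (wRef Q1 Q2 ν) ≤ (klS P (wRef Q1 Q2 ν) + klS P' (wRef Q1 Q2 ν)) / 2 :=
    klS_midpoint hP.1 hP'.1 hwnn
  have mid13 : mutI M (fun z => z.1) (fun z => z.2.2) ≤
      (mutI P (fun z => z.1) (fun z => z.2.2) + mutI P' (fun z => z.1) (fun z => z.2.2)) / 2 :=
    mutI13_mid hP hP' hm1 hm1' h3
  -- nonnegativity
  have nn13M : 0 ≤ mutI M (fun z => z.1) (fun z => z.2.2) := mutI_nonneg hM _ _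
  have nn13P : 0 ≤ mutI P (fun z => z.1) (fun z => z.2.2) := mutI_nonneg hP _ _
  have nn13P' : 0 ≤ mutI P' (fun z => z.1) (fun z => z.2.2) := mutI_nonneg hP' _ _
  have lb := coreLB q1 R2 P P'
  have hg := hgEq q1 P P'
  have nnmaxP : 0 ≤ max (mutI P (fun z => z.2.1) (fun z => (z.1, z.2.2)) - R2) 0 :=
    le_max_right _ _
  have nnmaxP' : 0 ≤ max (mutI P' (fun z => z.2.1) (fun z => (z.1, z.2.2)) - R2) 0 :=
    le_max_right _ _
  constructor
  · rw [sub_zero, max_eq_left nn13M]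
    linarith
  · have e : mutI M (fun z => z.1) (fun z => z.2.2)
        + mutI M (fun z => z.2.1) (fun z => (z.1, z.2.2)) - 0 - R2
        = klS M (wRef Q1 Q2 ν) - R2 := by
      rw [dI13M, dI213M, dklWM]; ring
    rw [e]
    have h4 := maxh4 midW R2
    have eP : klS P (wRef Q1 Q2 ν) - R2 = mutI P (fun z => z.1) (fun z => z.2.2)
        + (mutI P (fun z => z.2.1) (fun z => (z.1, z.2.2)) - R2) := by
      rw [dklWP, dI13P, dI213P]; ring
    have eP' : klS P' (wRef Q1 Q2 ν) - R2 = mutI P' (fun z => z.1) (fun z => z.2.2)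
        + (mutI P' (fun z => z.2.1) (fun z => (z.1, z.2.2)) - R2) := by
      rw [dklWP', dI13P', dI213P']; ring
    rw [eP, eP'] at h4
    have hmP := maxh3 nn13P (mutI P (fun z => z.2.1) (fun z => (z.1, z.2.2)) - R2)
    have hmP' := maxh3 nn13P' (mutI P' (fun z => z.2.1) (fun z => (z.1, z.2.2)) - R2)
    linarith

lemma mainS2 (hq_pos : ∀ x1 x2 y, 0 < q1 x1 x2 y)
    (hP : IsPMF P) (hP' : IsPMF P')
    (h23 : pushf P (fun z => (z.2.1, z.2.2)) = pushf P' (fun z => (z.2.1, z.2.2)))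
    (hm1 : pushf P (fun z => z.1) = Q1) (hm1' : pushf P' (fun z => z.1) = Q1)
    (hm2 : pushf P (fun z => z.2.1) = Q2) (hm2' : pushf P' (fun z => z.2.1) = Q2) :
    (Dq q1 (fun z => (P z + P' z) / 2)
        + mutI (fun z => (P z + P' z) / 2) (fun z => z.1) (fun z => z.2.1)
        + max (mutI (fun z => (P z + P' z) / 2) (fun z => z.1) (fun z => z.2.2) - 0) 0
      ≤ R2 + f2Fun q1 R2 1 (1/2) P P')
    ∧ (Dq q1 (fun z => (P z + P' z) / 2)
        + mutI (fun z => (P z + P' z) / 2) (fun z => z.1) (fun z => z.2.1)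
        + max (mutI (fun z => (P z + P' z) / 2) (fun z => z.1)
            (fun z => (z.2.1, z.2.2)) - 0) 0
      ≤ R2 + f2Fun q1 R2 1 (1/2) P P') := by
  have h3 : pushf P (fun z => z.2.2) = pushf P' (fun z => z.2.2) := by
    funext y
    rw [← sum_pushf_pair_fst P (fun z : X1 × X2 × Y1 => z.2.1) (fun z => z.2.2) y,
      ← sum_pushf_pair_fst P' (fun z : X1 × X2 × Y1 => z.2.1) (fun z => z.2.2) y]
    exact Finset.sum_congr rfl fun a _ => by rw [h23]
  set M : X1 × X2 × Y1 → ℝ := fun z => (P z + P' z) / 2 with hMdef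
  have hM : IsPMF M := isPMF_mid hP hP'
  have hMm1 : pushf M (fun z => z.1) = Q1 := pushf_mid_eq hm1 hm1'
  have hMm2 : pushf M (fun z => z.2.1) = Q2 := pushf_mid_eq hm2 hm2'
  set μ : X2 × Y1 → ℝ := pushf P (fun z => (z.2.1, z.2.2)) with hμ
  have hMm23 : pushf M (fun z => (z.2.1, z.2.2)) = μ := pushf_mid_eq rfl h23.symm
  have hQ1nn : ∀ x, 0 ≤ Q1 x := fun x => hm1 ▸ pushf_nonneg hP.1 x
  have hQ2nn : ∀ x, 0 ≤ Q2 x := fun x => hm2 ▸ pushf_nonneg hP.1 x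
  have hμnn : ∀ w, 0 ≤ μ w := fun w => pushf_nonneg hP.1 w
  have hrnn : ∀ z, 0 ≤ rRef q1 Q1 Q2 z := fun z => by
    have h0 := hq_pos z.1 z.2.1 z.2.2
    have h1 := hQ1nn z.1
    have h2 := hQ2nn z.2.1
    show 0 ≤ Q1 z.1 * Q2 z.2.1 * q1 z.1 z.2.1 z.2.2
    positivity
  have hvnn : ∀ z, 0 ≤ vRef Q1 μ z := fun z => by
    have h1 := hQ1nn z.1
    have h2 := hμnn (z.2.1, z.2.2)
    show 0 ≤ Q1 z.1 * μ (z.2.1, z.2.2)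
    positivity
  -- decompositions at M
  have dDqM : Dq q1 M = aP M - a12 M - aq q1 M := by rw [Dq]; exact dec_Dq hM hq_pos
  have dI12M : mutI M (fun z => z.1) (fun z => z.2.1) = a12 M - a1 Q1 M - a2 Q2 M :=
    dec_mutI12 hM hMm1 hMm2
  have dI13M : mutI M (fun z => z.1) (fun z => z.2.2) = a13 M - a1 Q1 M - a3 M :=
    dec_mutI13 hM hMm1
  have dI123M : mutI M (fun z => z.1) (fun z => (z.2.1, z.2.2)) = aP M - a1 Q1 M - a23 M :=
    dec_mutI1_23 hM hMm1
  have dklRM : klS M (rRef q1 Q1 Q2) = aP M - a1 Q1 M - a2 Q2 M - aq q1 M :=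
    dec_klR hM hq_pos hMm1 hMm2
  have dklVM : klS M (vRef Q1 μ) = aP M - a1 Q1 M - a23 M :=
    dec_klV hM hMm1 hMm23
  -- decompositions at P and P'
  have dklRP : klS P (rRef q1 Q1 Q2) = aP P - a1 Q1 P - a2 Q2 P - aq q1 P :=
    dec_klR hP hq_pos hm1 hm2
  have dklRP' : klS P' (rRef q1 Q1 Q2) = aP P' - a1 Q1 P' - a2 Q2 P' - aq q1 P' :=
    dec_klR hP' hq_pos hm1' hm2'
  have dklVP : klS P (vRef Q1 μ) = aP P - a1 Q1 P - a23 P :=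
    dec_klV hP hm1 hμ.symm
  have dklVP' : klS P' (vRef Q1 μ) = aP P' - a1 Q1 P' - a23 P' :=
    dec_klV hP' hm1' (hμ.trans h23).symm
  have dI13P : mutI P (fun z => z.1) (fun z => z.2.2) = a13 P - a1 Q1 P - a3 P :=
    dec_mutI13 hP hm1
  have dI13P' : mutI P' (fun z => z.1) (fun z => z.2.2) = a13 P' - a1 Q1 P' - a3 P' :=
    dec_mutI13 hP' hm1'
  have dI213P : mutI P (fun z => z.2.1) (fun z => (z.1, z.2.2)) = aP P - a2 Q2 P - a13 P :=
    dec_mutI2_13 hP hm2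
  have dI123P' : mutI P' (fun z => z.1) (fun z => (z.2.1, z.2.2)) = aP P' - a1 Q1 P' - a23 P' :=
    dec_mutI1_23 hP' hm1'
  have dCEP : condEnt P (fun z => z.1) (fun z => z.2.2) = a1 Q1 P - a13 P :=
    dec_condEnt13 hP hm1
  -- bridges
  have b1 : a1 Q1 P = a1 Q1 P' := (a1_bridge hm1).trans (a1_bridge hm1').symm
  have b2 : a2 Q2 P = a2 Q2 P' := (a2_bridge hm2).trans (a2_bridge hm2').symm
  have b3 : a3 P = a3 P' := (a3_bridge (P := P) h3).trans (a3_bridge (P := P') rfl).symm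
  have b23 : a23 P = a23 P' := (a23_bridge hμ.symm).trans (a23_bridge (hμ.trans h23).symm).symm
  -- midpoint convexity
  have midR : klS M (rRef q1 Q1 Q2) ≤ (klS P (rRef q1 Q1 Q2) + klS P' (rRef q1 Q1 Q2)) / 2 :=
    klS_midpoint hP.1 hP'.1 hrnn
  have midV : klS M (vRef Q1 μ) ≤ (klS P (vRef Q1 μ) + klS P' (vRef Q1 μ)) / 2 :=
    klS_midpoint hP.1 hP'.1 hvnn
  have mid13 : mutI M (fun z => z.1) (fun z => z.2.2) ≤
      (mutI P (fun z => z.1) (fun z => z.2.2) + mutI P' (fun z => z.1) (fun z => z.2.2)) / 2 :=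
    mutI13_mid hP hP' hm1 hm1' h3
  -- nonnegativity and conditional MI gaps
  have nn13M : 0 ≤ mutI M (fun z => z.1) (fun z => z.2.2) := mutI_nonneg hM _ _
  have nn123M : 0 ≤ mutI M (fun z => z.1) (fun z => (z.2.1, z.2.2)) := mutI_nonneg hM _ _
  have gapP : 0 ≤ aP P + a3 P - a23 P - a13 P := condMI_nonneg hP
  have gapP' : 0 ≤ aP P' + a3 P' - a23 P' - a13 P' := condMI_nonneg hP'
  have hg := hgEq q1 P P'
  rw [f2Fun]
  constructor
  · rw [sub_zero, max_eq_left nn13M]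
    linarith
  · rw [sub_zero, max_eq_left nn123M]
    linarith

end MainIneq

lemma le_coe_add_iInf {ι : Sort*} (x : EReal) (r : ℝ) (f : ι → EReal)
    (h : ∀ i, x ≤ (r : EReal) + f i) : x ≤ (r : EReal) + ⨅ i, f i := by
  have h1 : x - (r : EReal) ≤ ⨅ i, f i :=
    le_iInf fun i => EReal.sub_le_of_le_add (by rw [add_comm]; exact h i)
  have h2 := (EReal.sub_le_iff_le_add (Or.inl (EReal.coe_ne_bot r))
    (Or.inl (EReal.coe_ne_top r))).1 h1
  rwa [add_comm] at h2

/-- at `R1 = 0` the benchmark exponent is dominated by the optimized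
new exponent. -/
theorem stmt17 {X1 X2 Y1 : Type*} [Fintype X1] [DecidableEq X1] [Fintype X2] [DecidableEq X2]
    [Fintype Y1] [DecidableEq Y1]
    (q1 : X1 → X2 → Y1 → ℝ) (hq_pos : ∀ x1 x2 y, 0 < q1 x1 x2 y)
    (hq_sum : ∀ x1 x2, ∑ y, q1 x1 x2 y = 1)
    (R2 : ℝ) (hR2 : 0 ≤ R2) (Q1 : X1 → ℝ) (Q2 : X2 → ℝ) (hQ1 : IsPMF Q1) (hQ2 : IsPMF Q2) :
    EB1 q1 Q1 Q2 0 R2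
      ≤ ⨆ ρ : Set.Icc (0 : ℝ) 1, ⨆ lam : Set.Icc (0 : ℝ) 1,
          ER1 q1 0 R2 Q1 Q2 (ρ : ℝ) (lam : ℝ) := by
  have key : EB1 q1 Q1 Q2 0 R2 ≤ ER1 q1 0 R2 Q1 Q2 (1 : ℝ) (1/2 : ℝ) := by
    rw [ER1]
    have hr : ((R2 - (1:ℝ) * 0 : ℝ) : EReal) = ((R2 : ℝ) : EReal) := by norm_num
    rw [hr]
    have hS1 : EB1 q1 Q1 Q2 0 R2 ≤ ((R2 : ℝ) : EReal) +
        ⨅ PP : S1set Y1 Q1 Q2, ((f1Fun q1 R2 1 (1/2) PP.1.1 PP.1.2 : ℝ) : EReal) := by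
      apply le_coe_add_iInf
      rintro ⟨⟨P, P'⟩, hP, hP', h3, hm1, hm1', hm2, hm2'⟩
      obtain ⟨ha, hb⟩ := mainS1 (R2 := R2) hq_pos hP hP' h3 hm1 hm1' hm2 hm2'
      set M : X1 × X2 × Y1 → ℝ := fun z => (P z + P' z) / 2 with hMdef
      have hMmem : M ∈ Pset Y1 Q1 Q2 :=
        ⟨isPMF_mid hP hP', pushf_mid_eq hm1 hm1', pushf_mid_eq hm2 hm2'⟩
      have hEa : E1only q1 Q1 Q2 0 ≤
          ((Dq q1 M + mutI M (fun z => z.1) (fun z => z.2.1)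
            + max (mutI M (fun z => z.1) (fun z => z.2.2) - 0) 0 : ℝ) : EReal) :=
        iInf_le (fun Pp : Pset Y1 Q1 Q2 =>
          ((Dq q1 Pp.1 + mutI Pp.1 (fun z => z.1) (fun z => z.2.1)
            + max (mutI Pp.1 (fun z => z.1) (fun z => z.2.2) - 0) 0 : ℝ) : EReal))
          ⟨M, hMmem⟩
      have hEb : E12 q1 Q1 Q2 0 R2 ≤
          ((Dq q1 M + mutI M (fun z => z.1) (fun z => z.2.1)
            + max (mutI M (fun z => z.1) (fun z => z.2.2)
              + mutI M (fun z => z.2.1) (fun z => (z.1, z.2.2)) - 0 - R2) 0 : ℝ) : EReal) :=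
        iInf_le (fun Pp : Pset Y1 Q1 Q2 =>
          ((Dq q1 Pp.1 + mutI Pp.1 (fun z => z.1) (fun z => z.2.1)
            + max (mutI Pp.1 (fun z => z.1) (fun z => z.2.2)
              + mutI Pp.1 (fun z => z.2.1) (fun z => (z.1, z.2.2)) - 0 - R2) 0 : ℝ) : EReal))
          ⟨M, hMmem⟩
      rw [EB1]
      have hcoe : ∀ x : ℝ, x ≤ R2 + f1Fun q1 R2 1 (1/2) P P' →
          ((x : ℝ) : EReal) ≤ ((R2 : ℝ) : EReal) +
            ((f1Fun q1 R2 1 (1/2) P P' : ℝ) : EReal) := by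
        intro x hx
        rw [← EReal.coe_add]
        exact EReal.coe_le_coe_iff.2 hx
      apply max_le
      · exact hEa.trans (hcoe _ ha)
      · exact (min_le_left _ _).trans (hEb.trans (hcoe _ hb))
    have hS2 : EB1 q1 Q1 Q2 0 R2 ≤ ((R2 : ℝ) : EReal) +
        ⨅ PP : S2set Y1 Q1 Q2 R2, ((f2Fun q1 R2 1 (1/2) PP.1.1 PP.1.2 : ℝ) : EReal) := by
      apply le_coe_add_iInf
      rintro ⟨⟨P, P'⟩, hP, hP', hm1, hm1', hm2, hm2', hRle, h23⟩
      obtain ⟨ha, hb⟩ := mainS2 (R2 := R2) hq_pos hP hP' h23 hm1 hm1' hm2 hm2'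
      set M : X1 × X2 × Y1 → ℝ := fun z => (P z + P' z) / 2 with hMdef
      have hMmem : M ∈ Pset Y1 Q1 Q2 :=
        ⟨isPMF_mid hP hP', pushf_mid_eq hm1 hm1', pushf_mid_eq hm2 hm2'⟩
      have hEa : E1only q1 Q1 Q2 0 ≤
          ((Dq q1 M + mutI M (fun z => z.1) (fun z => z.2.1)
            + max (mutI M (fun z => z.1) (fun z => z.2.2) - 0) 0 : ℝ) : EReal) :=
        iInf_le (fun Pp : Pset Y1 Q1 Q2 =>
          ((Dq q1 Pp.1 + mutI Pp.1 (fun z => z.1) (fun z => z.2.1)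
            + max (mutI Pp.1 (fun z => z.1) (fun z => z.2.2) - 0) 0 : ℝ) : EReal))
          ⟨M, hMmem⟩
      have hEb : E1g2 q1 Q1 Q2 0 ≤
          ((Dq q1 M + mutI M (fun z => z.1) (fun z => z.2.1)
            + max (mutI M (fun z => z.1) (fun z => (z.2.1, z.2.2)) - 0) 0 : ℝ) : EReal) :=
        iInf_le (fun Pp : Pset Y1 Q1 Q2 =>
          ((Dq q1 Pp.1 + mutI Pp.1 (fun z => z.1) (fun z => z.2.1)
            + max (mutI Pp.1 (fun z => z.1) (fun z => (z.2.1, z.2.2)) - 0) 0 : ℝ) : EReal))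
          ⟨M, hMmem⟩
      rw [EB1]
      have hcoe : ∀ x : ℝ, x ≤ R2 + f2Fun q1 R2 1 (1/2) P P' →
          ((x : ℝ) : EReal) ≤ ((R2 : ℝ) : EReal) +
            ((f2Fun q1 R2 1 (1/2) P P' : ℝ) : EReal) := by
        intro x hx
        rw [← EReal.coe_add]
        exact EReal.coe_le_coe_iff.2 hx
      apply max_le
      · exact hEa.trans (hcoe _ ha)
      · exact (min_le_right _ _).trans (hEb.trans (hcoe _ hb))
    rcases min_choice
      (⨅ PP : S1set Y1 Q1 Q2, ((f1Fun q1 R2 1 (1/2) PP.1.1 PP.1.2 : ℝ) : EReal))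
      (⨅ PP : S2set Y1 Q1 Q2 R2, ((f2Fun q1 R2 1 (1/2) PP.1.1 PP.1.2 : ℝ) : EReal))
      with h | h <;> rw [h]
    · exact hS1
    · exact hS2
  refine le_trans key ?_
  refine le_trans ?_ (le_iSup_of_le (⟨1, by norm_num⟩ : Set.Icc (0:ℝ) 1) le_rfl)
  exact le_trans (le_of_eq rfl)
    (le_iSup_of_le (⟨1/2, by norm_num⟩ : Set.Icc (0:ℝ) 1) le_rfl)
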